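/- A totally disconnected compact metric space X is rigid if and only if X is finite. -/

import Mathlib

open Function Set Filter Topology Metric

namespace CantorRetract
attribute [local instance] Classical.propDecidable

variable (A : Set (ℕ → Bool))

noncomputable def nextBit (p : ℕ → Bool) (n : ℕ) (b : Bool) : Bool :=
  if ∃ a ∈ A, (∀ i < n, a i = p i) ∧ a n = b then b else !b

noncomputable def Rp (x : ℕ → Bool) : ℕ → (ℕ → Bool)
  | 0 => fun _ => false
  | n + 1 => Function.update (Rp x n) n (nextBit A (Rp x n) n (x n))

noncomputable def ret (x : ℕ → Bool) (n : ℕ) : Bool := Rp A x (n + 1) n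

theorem Rp_eq_ret (x : ℕ → Bool) : ∀ n i, i < n → Rp A x n i = ret A x i := by
  intro n
  induction n with
  | zero => omega
  | succ n ih =>
    intro i hi
    rcases Nat.lt_succ_iff_lt_or_eq.mp hi with h | rfl
    · show Function.update (Rp A x n) n _ i = _
      rw [Function.update_of_ne (by omega)]
      exact ih i h
    · rfl

theorem ret_eq (x : ℕ → Bool) (n : ℕ) :
    ret A x n = if ∃ a ∈ A, (∀ i < n, a i = ret A x i) ∧ a n = x n then x n else !(x n) := by
  have hcond : (∃ a ∈ A, (∀ i < n, a i = Rp A x n i) ∧ a n = x n) ↔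
      (∃ a ∈ A, (∀ i < n, a i = ret A x i) ∧ a n = x n) := by
    constructor
    · rintro ⟨a, ha, h1, h2⟩
      exact ⟨a, ha, fun i hi => by rw [h1 i hi, Rp_eq_ret A x n i hi], h2⟩
    · rintro ⟨a, ha, h1, h2⟩
      exact ⟨a, ha, fun i hi => by rw [h1 i hi, ← Rp_eq_ret A x n i hi], h2⟩
  show Function.update (Rp A x n) n (nextBit A (Rp A x n) n (x n)) n = _
  rw [Function.update_self]
  unfold nextBit
  rw [if_congr hcond rfl rfl]

def P (x : ℕ → Bool) (n : ℕ) : Set (ℕ → Bool) := {a ∈ A | ∀ i < n, a i = ret A x i}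

theorem P_anti (x : ℕ → Bool) (n : ℕ) : P A x (n + 1) ⊆ P A x n :=
  fun a ⟨ha, h⟩ => ⟨ha, fun i hi => h i (by omega)⟩

theorem P_nonempty (hne : A.Nonempty) (x : ℕ → Bool) : ∀ n, (P A x n).Nonempty := by
  intro n
  induction n with
  | zero => exact hne.imp fun a ha => ⟨ha, by omega⟩
  | succ n ih =>
    by_cases h : ∃ a ∈ A, (∀ i < n, a i = ret A x i) ∧ a n = x n
    · obtain ⟨a, ha, h1, h2⟩ := h
      refine ⟨a, ha, fun i hi => ?_⟩
      rcases Nat.lt_succ_iff_lt_or_eq.mp hi with h' | rfl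
      · exact h1 i h'
      · rw [ret_eq, if_pos ⟨a, ha, h1, h2⟩, h2]
    · obtain ⟨a, ha, h1⟩ := ih
      refine ⟨a, ha, fun i hi => ?_⟩
      rcases Nat.lt_succ_iff_lt_or_eq.mp hi with h' | rfl
      · exact h1 i h'
      · rw [ret_eq, if_neg h]
        exact Bool.eq_not_iff.mpr (fun hc => h ⟨a, ha, h1, hc⟩)

theorem P_closed (hA : IsClosed A) (x : ℕ → Bool) (n : ℕ) : IsClosed (P A x n) := by
  have : P A x n = A ∩ ⋂ i ∈ Finset.range n, {a : ℕ → Bool | a i = ret A x i} := by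
    ext a
    simp [P, Set.mem_iInter, Finset.mem_range]
  rw [this]
  refine hA.inter (isClosed_biInter fun i _ => ?_)
  have h2 : {a : ℕ → Bool | a i = ret A x i} = (fun a : ℕ → Bool => a i) ⁻¹' {ret A x i} := rfl
  rw [h2]
  exact (isClosed_singleton).preimage (continuous_apply i)

theorem ret_mem (hA : IsClosed A) (hne : A.Nonempty) (x : ℕ → Bool) : ret A x ∈ A := by
  have hcap : (⋂ n, P A x n).Nonempty := by
    apply IsCompact.nonempty_iInter_of_sequence_nonempty_isCompact_isClosed
      (P A x) (P_anti A x) (P_nonempty A hne x)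
    · exact (P_closed A hA x 0).isCompact
    · exact P_closed A hA x
  obtain ⟨a, ha⟩ := hcap
  have h1 : a ∈ A := (Set.mem_iInter.mp ha 0).1
  have h2 : a = ret A x := by
    funext i
    exact (Set.mem_iInter.mp ha (i + 1)).2 i (by omega)
  rwa [h2] at h1

theorem ret_of_mem (x : ℕ → Bool) (hx : x ∈ A) : ret A x = x := by
  funext n
  induction n using Nat.strong_induction_on with
  | _ n ih =>
    rw [ret_eq, if_pos ⟨x, hx, fun i hi => (ih i hi).symm, rfl⟩]

theorem Rp_congr : ∀ n, ∀ x y : ℕ → Bool, (∀ i < n, x i = y i) → Rp A x n = Rp A y n := by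
  intro n
  induction n with
  | zero => intro x y _; rfl
  | succ n ih =>
    intro x y h
    show Function.update _ _ _ = Function.update _ _ _
    rw [ih x y (fun i hi => h i (by omega)), h n (by omega)]

theorem ret_congr (n : ℕ) (x y : ℕ → Bool) (h : ∀ i < n + 1, x i = y i) :
    ret A x n = ret A y n := by
  show Rp A x (n+1) n = Rp A y (n+1) n
  rw [Rp_congr A (n+1) x y h]

theorem ret_continuous : Continuous (ret A) := by
  apply continuous_pi
  intro n
  have : (fun x => ret A x n) =
      (fun v : Fin (n+1) → Bool => ret A (fun i => if h : i < n + 1 then v ⟨i, h⟩ else false) n)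
        ∘ (fun x : ℕ → Bool => fun i : Fin (n+1) => x i) := by
    funext x
    exact ret_congr A n x _ (fun i hi => by rw [dif_pos hi])
  rw [this]
  exact (continuous_of_discreteTopology).comp (continuous_pi fun i => continuous_apply (i : ℕ))

end CantorRetract

theorem cantor_retract (A : Set (ℕ → Bool)) (hA : IsClosed A) (hne : A.Nonempty) :
    ∃ r : (ℕ → Bool) → (ℕ → Bool), Continuous r ∧ (∀ x, r x ∈ A) ∧ ∀ a ∈ A, r a = a :=
  ⟨CantorRetract.ret A, CantorRetract.ret_continuous A,
    CantorRetract.ret_mem A hA hne, CantorRetract.ret_of_mem A⟩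


theorem rigid_of_finite {X : Type*} [MetricSpace X] [CompactSpace X] (hX : Finite X) :
    ∀ f : X → X, Continuous f → Function.Surjective f →
      ∀ ε > (0 : ℝ), ∃ n : ℕ, 0 < n ∧ ∀ x : X, dist (f^[n] x) x < ε := by
  intro f _ hs ε hε
  have hb : Function.Bijective f := ⟨Finite.injective_iff_surjective.2 hs, hs⟩
  let e : Equiv.Perm X := Equiv.ofBijective f hb
  have hcoe : ∀ n : ℕ, ∀ x, f^[n] x = (e ^ n) x := by
    intro n
    induction n with
    | zero => simp
    | succ n ih =>
      intro x
      rw [Function.iterate_succ_apply', pow_succ']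
      simp only [Equiv.Perm.coe_mul, Function.comp_apply]
      rw [ih x]
      rfl
  refine ⟨orderOf e, orderOf_pos e, fun x => ?_⟩
  rw [hcoe, pow_orderOf_eq_one e]
  simpa using hε


section CaseA
variable {X : Type*} [MetricSpace X] [CompactSpace X]

theorem caseA (hI : {x : X | IsOpen ({x} : Set X)}.Infinite) :
    ∃ f : X → X, Continuous f ∧ Function.Surjective f ∧ ¬ Function.Injective f := by
  classical
  set I := {x : X | IsOpen ({x} : Set X)} with hIdef
  let u := hI.natEmbedding
  let v : ℕ → X := fun n => (u n : X)
  have hvinj : Function.Injective v := fun m n h => by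
    have := u.injective (Subtype.ext h); exact this
  have hvI : ∀ n, IsOpen ({v n} : Set X) := fun n => (u n).2
  obtain ⟨p, φ, hφ, hconv⟩ := CompactSpace.tendsto_subseq v
  set w : ℕ → X := v ∘ φ with hw
  have hwinj : Function.Injective w := hvinj.comp hφ.injective
  have hwI : ∀ n, IsOpen ({w n} : Set X) := fun n => hvI (φ n)
  set N : ℕ := if h : ∃ m, w m = p then h.choose + 1 else 0 with hN
  set a : ℕ → X := fun n => w (n + N) with ha
  have hainj : Function.Injective a := fun m n h => by
    have := hwinj h; omega
  have haI : ∀ n, IsOpen ({a n} : Set X) := fun n => hwI _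
  have hanep : ∀ n, a n ≠ p := by
    intro n hn
    have hex : ∃ m, w m = p := ⟨n + N, hn⟩
    have hNval : N = hex.choose + 1 := by rw [hN, dif_pos hex]
    have := hwinj (hn.trans hex.choose_spec.symm)
    omega
  have haconv : Tendsto a atTop (𝓝 p) := hconv.comp (tendsto_add_atTop_nat N)
  have hpnr : ¬ ∃ n, p = a n := fun ⟨n, h⟩ => hanep n h.symm
  set f : X → X := fun x =>
    if h : ∃ n, x = a n then (if h.choose = 0 then p else a (h.choose - 1)) else x with hf
  have hfa : ∀ n, f (a n) = if n = 0 then p else a (n - 1) := by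
    intro n
    have hex : ∃ m, a n = a m := ⟨n, rfl⟩
    have hch : hex.choose = n := (hainj hex.choose_spec).symm
    simp only [hf, dif_pos hex, hch]
  have hfid : ∀ x, ¬ (∃ n, x = a n) → f x = x := fun x hx => by
    simp only [hf, dif_neg hx]
  have hfp : f p = p := hfid p hpnr
  -- surjectivity
  have hsurj : Function.Surjective f := by
    intro z
    by_cases hz : ∃ n, z = a n
    · obtain ⟨n, rfl⟩ := hz
      exact ⟨a (n + 1), by rw [hfa]; simp⟩
    · exact ⟨z, hfid z hz⟩
  -- non-injectivity
  have hninj : ¬ Function.Injective f := by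
    intro hinj
    have h1 : f (a 0) = p := by rw [hfa]; simp
    have : a 0 = p := hinj (h1.trans hfp.symm)
    exact hanep 0 this
  -- continuity
  have hcont : Continuous f := by
    rw [continuous_iff_continuousAt]
    intro x
    by_cases hx : ∃ n, x = a n
    · -- isolated point
      obtain ⟨n, rfl⟩ := hx
      have hnx : 𝓝 (a n) = pure (a n) :=
        le_antisymm (le_pure_iff.mpr ((haI n).mem_nhds rfl)) (pure_le_nhds _)
      unfold ContinuousAt
      rw [hnx]
      exact tendsto_pure_nhds f (a n)
    · by_cases hxp : x = p
      · unfold ContinuousAt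
        rw [hxp, Metric.tendsto_nhds, hfp]
        intro ε hε
        obtain ⟨N₁, hN₁⟩ := (Metric.tendsto_atTop.mp haconv) ε hε
        have hF : (a '' {m | m < N₁ + 1}).Finite := Set.Finite.image _ (Set.finite_lt_nat _)
        have hpF : p ∈ (a '' {m | m < N₁ + 1})ᶜ := by
          intro ⟨m, _, hm⟩
          exact hanep m hm
        have hmem : (a '' {m | m < N₁ + 1})ᶜ ∈ 𝓝 p := hF.isClosed.isOpen_compl.mem_nhds hpF
        have hball : ball p ε ∈ 𝓝 p := ball_mem_nhds p hε
        filter_upwards [hmem, hball] with y hyF hyb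
        by_cases hy : ∃ n, y = a n
        · obtain ⟨n, rfl⟩ := hy
          have hn : ¬ n < N₁ + 1 := fun h => hyF ⟨n, h, rfl⟩
          rw [hfa, if_neg (by omega)]
          exact hN₁ (n - 1) (by omega)
        · rw [hfid y hy]
          rwa [mem_ball] at hyb
      · -- locally the identity
        have hρ : 0 < dist p x := dist_pos.mpr (Ne.symm hxp)
        obtain ⟨N₂, hN₂⟩ := (Metric.tendsto_atTop.mp haconv) (dist p x / 2) (by linarith)
        have hF : (a '' {m | m < N₂}).Finite := Set.Finite.image _ (Set.finite_lt_nat _)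
        have hxF : x ∈ (a '' {m | m < N₂})ᶜ := by
          intro ⟨m, _, hm⟩
          exact hx ⟨m, hm.symm⟩
        set V : Set X := ball x (dist p x / 2) ∩ (a '' {m | m < N₂})ᶜ with hV
        have hVmem : V ∈ 𝓝 x :=
          inter_mem (ball_mem_nhds x (by linarith)) (hF.isClosed.isOpen_compl.mem_nhds hxF)
        have hVa : ∀ y ∈ V, ¬ ∃ n, y = a n := by
          rintro y ⟨hyb, hyF⟩ ⟨n, rfl⟩
          by_cases hn : n < N₂
          · exact hyF ⟨n, hn, rfl⟩
          · have h1 := hN₂ n (by omega)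
            have h2 := dist_triangle p (a n) x
            rw [mem_ball] at hyb
            rw [dist_comm] at h1
            linarith
        apply continuousAt_id.congr
        filter_upwards [hVmem] with y hy
        exact (hfid y (hVa y hy)).symm
  exact ⟨f, hcont, hsurj, hninj⟩

end CaseA

section Sep
variable {X : Type*} [MetricSpace X] [CompactSpace X] [TotallyDisconnectedSpace X]

theorem exists_clopen_separating [Nonempty X] :
    ∃ U : ℕ → Set X, (∀ n, IsClopen (U n)) ∧
      ∀ x y : X, x ≠ y → ∃ n, x ∈ U n ∧ y ∉ U n := by
  classical
  obtain ⟨D, hDc, hDd⟩ := TopologicalSpace.exists_countable_dense X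
  let pick : X → ℚ → X → ℚ → Set X := fun d q d' q' =>
    if h : ∃ V : Set X, IsClopen V ∧ ball d (q : ℝ) ⊆ V ∧ V ⊆ (ball d' (q' : ℝ))ᶜ
    then h.choose else ∅
  have pick_clopen : ∀ d q d' q', IsClopen (pick d q d' q') := by
    intro d q d' q'
    simp only [pick]
    split
    · next h => exact h.choose_spec.1
    · exact isClopen_empty
  have hDne : D.Nonempty := hDd.nonempty
  haveI : Countable ↥D := hDc.to_subtype
  haveI : Nonempty ↥D := hDne.to_subtype
  obtain ⟨e, he⟩ := exists_surjective_nat (↥D × ℚ × ↥D × ℚ)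
  refine ⟨fun n => pick (e n).1 (e n).2.1 (e n).2.2.1 (e n).2.2.2,
    fun n => pick_clopen _ _ _ _, ?_⟩
  intro x y hxy
  obtain ⟨W, hW, hxW, hWy⟩ := compact_exists_isClopen_in_isOpen
    (isOpen_compl_singleton (x := y)) (by simpa using hxy)
  obtain ⟨r, hr, hball⟩ := Metric.isOpen_iff.mp hW.2 x hxW
  have hyW : y ∈ Wᶜ := fun h => (hWy h) rfl
  obtain ⟨s, hs, hball'⟩ := Metric.isOpen_iff.mp hW.compl.2 y hyW
  obtain ⟨d, hdD, hd⟩ := hDd.exists_dist_lt x (by positivity : (0:ℝ) < r/4)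
  obtain ⟨d', hd'D, hd'⟩ := hDd.exists_dist_lt y (by positivity : (0:ℝ) < s/4)
  obtain ⟨q, hq1, hq2⟩ := exists_rat_btwn (by linarith : r/4 < r/2)
  obtain ⟨q', hq'1, hq'2⟩ := exists_rat_btwn (by linarith : s/4 < s/2)
  have hxball : x ∈ ball d (q : ℝ) := by
    rw [mem_ball]; linarith
  have hyball : y ∈ ball d' (q' : ℝ) := by
    rw [mem_ball]; linarith
  have hsub : ball d (q : ℝ) ⊆ W := by
    intro z hz
    apply hball
    rw [mem_ball] at hz ⊢
    have := dist_triangle z d x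
    rw [dist_comm d x] at this
    linarith
  have hsub' : ball d' (q' : ℝ) ⊆ Wᶜ := by
    intro z hz
    apply hball'
    rw [mem_ball] at hz ⊢
    have := dist_triangle z d' y
    rw [dist_comm d' y] at this
    linarith
  have hex : ∃ V : Set X, IsClopen V ∧ ball (d : X) (q : ℝ) ⊆ V ∧ V ⊆ (ball (d' : X) (q' : ℝ))ᶜ :=
    ⟨W, hW, hsub, fun z hz hz' => hsub' hz' hz⟩
  obtain ⟨n, hn⟩ := he (⟨⟨d, hdD⟩, q, ⟨d', hd'D⟩, q'⟩)
  refine ⟨n, ?_, ?_⟩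
  · simp only [hn, pick, dif_pos hex]
    exact hex.choose_spec.2.1 hxball
  · simp only [hn, pick, dif_pos hex]
    exact fun hy => hex.choose_spec.2.2 hy hyball

theorem exists_cantor_onto [Nonempty X] (C : Set X) (hC : IsClosed C) (hne : C.Nonempty) :
    ∃ s : (ℕ → Bool) → X, Continuous s ∧ (∀ σ, s σ ∈ C) ∧ ∀ c ∈ C, ∃ σ, s σ = c := by
  classical
  obtain ⟨U, hUc, hUs⟩ := exists_clopen_separating (X := X)
  set g : X → ℕ → Bool := fun x n => decide (x ∈ U n) with hg
  have hgc : Continuous g := by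
    apply continuous_pi
    intro n
    apply IsLocallyConstant.continuous
    intro s
    have : (fun x : X => decide (x ∈ U n)) ⁻¹' s =
        (if true ∈ s then U n else ∅) ∪ (if false ∈ s then (U n)ᶜ else ∅) := by
      ext x
      by_cases hx : x ∈ U n <;> simp [hx]
    show IsOpen ((fun x : X => decide (x ∈ U n)) ⁻¹' s)
    rw [this]
    apply IsOpen.union <;> split
    · exact (hUc n).2
    · exact isOpen_empty
    · exact (hUc n).compl.2
    · exact isOpen_empty
  have hgi : Function.Injective g := by
    intro x y h
    by_contra hne'
    obtain ⟨n, hx, hy⟩ := hUs x y hne'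
    have := congrFun h n
    simp only [hg] at this
    rw [decide_eq_decide] at this
    exact hy (this.mp hx)
  have hA : IsClosed (g '' C) := (hC.isCompact.image hgc).isClosed
  have hAne : (g '' C).Nonempty := hne.image g
  obtain ⟨r, hrc, hrmem, hrfix⟩ := cantor_retract (g '' C) hA hAne
  let E : X ≃ₜ Set.range g :=
    Continuous.homeoOfEquivCompactToT2 (f := Equiv.ofInjective g hgi)
      (Continuous.subtype_mk hgc _)
  have hrange : ∀ σ, r σ ∈ Set.range g := fun σ => by
    obtain ⟨c, _, hc⟩ := hrmem σ
    exact ⟨c, hc⟩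
  refine ⟨fun σ => E.symm ⟨r σ, hrange σ⟩, ?_, ?_, ?_⟩
  · exact E.symm.continuous.comp (Continuous.subtype_mk hrc _)
  · intro σ
    show E.symm ⟨r σ, hrange σ⟩ ∈ C
    obtain ⟨c, hcC, hgc'⟩ := hrmem σ
    have h1 : (⟨r σ, hrange σ⟩ : Set.range g) = ⟨g c, Set.mem_range_self c⟩ :=
      Subtype.ext hgc'.symm
    have h1' : E.symm ⟨r σ, hrange σ⟩ = E.symm ⟨g c, Set.mem_range_self c⟩ := congrArg _ h1
    rw [h1']
    have h2 : E.symm ⟨g c, Set.mem_range_self c⟩ = c := by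
      have : E c = ⟨g c, Set.mem_range_self c⟩ := rfl
      rw [← this, Homeomorph.symm_apply_apply]
    rw [h2]; exact hcC
  · intro c hcC
    refine ⟨g c, ?_⟩
    show E.symm ⟨r (g c), hrange (g c)⟩ = c
    have h1 : r (g c) = g c := hrfix _ ⟨c, hcC, rfl⟩
    have h2 : (⟨r (g c), hrange (g c)⟩ : Set.range g) = ⟨g c, Set.mem_range_self c⟩ :=
      Subtype.ext h1
    have h2' : E.symm ⟨r (g c), hrange (g c)⟩ = E.symm ⟨g c, Set.mem_range_self c⟩ := congrArg _ h2
    rw [h2']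
    have : E c = ⟨g c, Set.mem_range_self c⟩ := rfl
    rw [← this, Homeomorph.symm_apply_apply]

end Sep

section PathRec
attribute [local instance] Classical.propDecidable

noncomputable def pathRec {α Z : Type*} (root : α) (l r : α → α) (mem : Z → α → Prop)
    (x : Z) : ℕ → α
  | 0 => root
  | n+1 => if mem x (l (pathRec root l r mem x n)) then l (pathRec root l r mem x n)
           else r (pathRec root l r mem x n)

noncomputable def codeRec {α : Type*} (root : α) (l r : α → α) (σ : ℕ → Bool) : ℕ → α
  | 0 => root
  | n+1 => if σ n then r (codeRec root l r σ n) else l (codeRec root l r σ n)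

end PathRec

theorem caseB {X : Type*} [MetricSpace X] [CompactSpace X] [TotallyDisconnectedSpace X] (hX : Infinite X) (hI : {x : X | IsOpen ({x} : Set X)}.Finite) :
    ∃ f : X → X, Continuous f ∧ Function.Surjective f ∧ ¬ Function.Injective f := by
  classical
  set I := {x : X | IsOpen ({x} : Set X)} with hIdef
  set C : Set X := Iᶜ with hCdef
  have hIopen : IsOpen I := by
    have h : I = ⋃ x ∈ I, ({x} : Set X) := by ext z; simp [hIdef]
    rw [h]
    exact isOpen_biUnion fun x hx => hx
  have hCclopen : IsClopen C := ⟨hIopen.isClosed_compl, hI.isClosed.isOpen_compl⟩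
  have hCinf : C.Infinite := hI.infinite_compl
  have hCne : C.Nonempty := hCinf.nonempty
  -- every nonempty clopen subset of C is infinite
  have hinf : ∀ V : Set X, IsClopen V → V ⊆ C → V.Nonempty → V.Infinite := by
    intro V hV hVC ⟨x, hx⟩ hVfin
    have h1 : (V \ {x}).Finite := hVfin.diff
    have h2 : IsOpen ({x} : Set X) := by
      have : ({x} : Set X) = V ∩ (V \ {x})ᶜ := by
        ext z
        constructor
        · rintro rfl; exact ⟨hx, fun ⟨_, hz⟩ => hz rfl⟩
        · rintro ⟨hzV, hz⟩
          by_contra hzx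
          exact hz ⟨hzV, fun h => hzx h⟩
      rw [this]
      exact hV.2.inter h1.isClosed.isOpen_compl
    exact hVC hx h2
  -- pick the non-injectivity pair
  obtain ⟨x₀, hx₀⟩ := id hCne
  obtain ⟨y₀, hy₀, hy₀x₀⟩ : ∃ y₀ ∈ C, y₀ ≠ x₀ := by
    obtain ⟨y₀, hy⟩ := (hCinf.diff (Set.finite_singleton x₀)).nonempty
    exact ⟨y₀, hy.1, fun h => hy.2 (by simp [h])⟩
  -- the subtype of nonempty clopen subsets of C
  let S := {V : Set X // IsClopen V ∧ V.Nonempty ∧ V ⊆ C}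
  -- splitting
  have hsplit : ∀ V : S, ∃ L : S, ∃ R : S,
      (L.val ∪ R.val = V.val) ∧ Disjoint L.val R.val ∧
      (x₀ ∈ V.val → y₀ ∈ V.val → (x₀ ∈ L.val ↔ y₀ ∈ L.val)) := by
    rintro ⟨V, hV, hVne, hVC⟩
    simp only
    by_cases hxy : x₀ ∈ V ∧ y₀ ∈ V
    · -- split with x₀, y₀ on the same side
      obtain ⟨z, hzV, hz⟩ : ∃ z ∈ V, z ∉ ({x₀, y₀} : Set X) := by
        obtain ⟨z, hz⟩ := ((hinf V hV hVC hVne).diff (Set.toFinite {x₀, y₀})).nonempty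
        exact ⟨z, hz.1, hz.2⟩
      obtain ⟨W, hW, hzW, hWsub⟩ := compact_exists_isClopen_in_isOpen
        (((Set.toFinite {x₀, y₀}).isClosed).isOpen_compl) hz
      refine ⟨⟨V ∩ Wᶜ, hV.inter hW.compl, ⟨x₀, hxy.1, fun h => (hWsub h) (by simp)⟩,
          (inter_subset_left).trans hVC⟩,
        ⟨V ∩ W, hV.inter hW, ⟨z, hzV, hzW⟩, (inter_subset_left).trans hVC⟩, ?_, ?_, ?_⟩
      · ext t
        constructor
        · rintro (⟨h1, _⟩ | ⟨h1, _⟩) <;> exact h1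
        · intro ht
          by_cases htW : t ∈ W
          · exact Or.inr ⟨ht, htW⟩
          · exact Or.inl ⟨ht, htW⟩
      · exact Set.disjoint_left.mpr (fun t ⟨_, h1⟩ ⟨_, h2⟩ => h1 h2)
      · intro _ _
        constructor
        · intro _; exact ⟨hxy.2, fun h => (hWsub h) (by simp)⟩
        · intro _; exact ⟨hxy.1, fun h => (hWsub h) (by simp)⟩
    · -- arbitrary split
      obtain ⟨z₁, hz₁⟩ := id hVne
      obtain ⟨z₂, hz₂V, hz₂⟩ : ∃ z₂ ∈ V, z₂ ≠ z₁ := by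
        obtain ⟨z₂, hz⟩ := ((hinf V hV hVC hVne).diff (Set.finite_singleton z₁)).nonempty
        exact ⟨z₂, hz.1, fun h => hz.2 (by simp [h])⟩
      obtain ⟨W, hW, hzW, hWsub⟩ := compact_exists_isClopen_in_isOpen
        (isOpen_compl_singleton (x := z₁)) hz₂
      refine ⟨⟨V ∩ W, hV.inter hW, ⟨z₂, hz₂V, hzW⟩, (inter_subset_left).trans hVC⟩,
        ⟨V ∩ Wᶜ, hV.inter hW.compl, ⟨z₁, hz₁, fun h => (hWsub h) rfl⟩,
          (inter_subset_left).trans hVC⟩, ?_, ?_, ?_⟩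
      · ext t
        constructor
        · rintro (⟨h1, _⟩ | ⟨h1, _⟩) <;> exact h1
        · intro ht
          by_cases htW : t ∈ W
          · exact Or.inl ⟨ht, htW⟩
          · exact Or.inr ⟨ht, htW⟩
      · exact Set.disjoint_left.mpr (fun t ⟨_, h1⟩ ⟨_, h2⟩ => h2 h1)
      · intro hx hy; exact absurd ⟨hx, hy⟩ hxy
  choose Φl Φr hUnion hDisj hXY using hsplit
  set root : S := ⟨C, hCclopen, hCne, subset_rfl⟩ with hroot
  set T : X → ℕ → S := pathRec root Φl Φr (fun x V => x ∈ V.val) with hT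
  have hTsucc : ∀ x n, T x (n+1) =
      if x ∈ (Φl (T x n)).val then Φl (T x n) else Φr (T x n) := by
    intro x n
    simp only [hT, pathRec]
  have hT0 : ∀ x, T x 0 = root := fun x => rfl
  have hLsub : ∀ V : S, (Φl V).val ⊆ V.val := fun V =>
    (hUnion V) ▸ subset_union_left
  have hRsub : ∀ V : S, (Φr V).val ⊆ V.val := fun V =>
    (hUnion V) ▸ subset_union_right
  have hTsub : ∀ x n, (T x (n+1)).val ⊆ (T x n).val := by
    intro x n
    rw [hTsucc]
    split
    · exact hLsub _
    · exact hRsub _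
  have hTC : ∀ x n, (T x n).val ⊆ C := fun x n => (T x n).2.2.2
  have hTmem : ∀ x, x ∈ C → ∀ n, x ∈ (T x n).val := by
    intro x hx n
    induction n with
    | zero => exact hx
    | succ n ih =>
      rw [hTsucc]
      split
      · assumption
      · have : x ∈ (Φl (T x n)).val ∪ (Φr (T x n)).val := (hUnion (T x n)).symm ▸ ih
        rcases this with h | h
        · contradiction
        · exact h
  have hTeq : ∀ n, ∀ x y, y ∈ (T x n).val → T y n = T x n := by
    intro n
    induction n with
    | zero => intro x y _; rfl
    | succ n ih =>
      intro x y hy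
      have hy' : y ∈ (T x n).val := hTsub x n hy
      have h1 : T y n = T x n := ih x y hy'
      rw [hTsucc x n] at hy
      rw [hTsucc y n, h1, hTsucc x n]
      revert hy
      split
      · intro hy
        rw [if_pos hy]
      · intro hy
        rw [if_neg (fun h => Set.disjoint_left.mp (hDisj (T x n)) h hy)]
  set q : X → ℕ → Bool := fun x n => !decide (x ∈ (Φl (T x n)).val) with hq
  -- q is continuous in each coordinate
  have hqcont : ∀ n, IsLocallyConstant (fun x => q x n) := by
    intro n
    rw [IsLocallyConstant.iff_exists_open]
    intro x
    by_cases hx : x ∈ C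
    · refine ⟨(T x (n+1)).val, (T x (n+1)).2.1.2, hTmem x hx (n+1), ?_⟩
      intro y hy
      have h1 : T y n = T x n := hTeq n x y (hTsub x n hy)
      simp only [hq, h1]
      rw [hTsucc x n] at hy
      revert hy
      split
      · next hxL => intro hy; rw [decide_eq_true hy, decide_eq_true hxL]
      · next hxL =>
        intro hy
        have h2 : y ∉ (Φl (T x n)).val :=
          fun h => Set.disjoint_left.mp (hDisj (T x n)) h hy
        rw [decide_eq_false h2, decide_eq_false hxL]
    · refine ⟨Cᶜ, hCclopen.1.isOpen_compl, hx, ?_⟩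
      have key : ∀ z, z ∉ C → ∀ m, T z m = T x m := by
        intro z hz m
        induction m with
        | zero => rfl
        | succ m ih =>
          rw [hTsucc, hTsucc, ih]
          have h1 : z ∉ (Φl (T x m)).val := fun h => hz ((hLsub _).trans (hTC x m) h)
          have h2 : x ∉ (Φl (T x m)).val := fun h => hx ((hLsub _).trans (hTC x m) h)
          rw [if_neg h1, if_neg h2]
      intro y hy
      simp only [hq, key y hy n]
      have h1 : y ∉ (Φl (T x n)).val := fun h => hy ((hLsub _).trans (hTC x n) h)
      have h2 : x ∉ (Φl (T x n)).val := fun h => hx ((hLsub _).trans (hTC x n) h)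
      rw [decide_eq_false h1, decide_eq_false h2]
  -- q is onto the Cantor space, via points of C
  have hqsurj : ∀ σ : ℕ → Bool, ∃ x ∈ C, q x = σ := by
    intro σ
    set W : ℕ → S := codeRec root Φl Φr σ with hW
    have hWsucc : ∀ n, W (n+1) = if σ n then Φr (W n) else Φl (W n) := by
      intro n; simp only [hW, codeRec]
    have hWsub : ∀ n, (W (n+1)).val ⊆ (W n).val := by
      intro n; rw [hWsucc]; split
      · exact hRsub _
      · exact hLsub _
    have hcap : (⋂ n, (W n).val).Nonempty := by
      apply IsCompact.nonempty_iInter_of_sequence_nonempty_isCompact_isClosed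
        (fun n => (W n).val) hWsub (fun n => (W n).2.2.1)
      · exact (W 0).2.1.1.isCompact
      · exact fun n => (W n).2.1.1
    obtain ⟨x, hx⟩ := hcap
    have hxmem : ∀ n, x ∈ (W n).val := fun n => Set.mem_iInter.mp hx n
    have hxC : x ∈ C := (W 0).2.2.2 (hxmem 0)
    have hTW : ∀ n, T x n = W n := by
      intro n
      induction n with
      | zero => rfl
      | succ n ih =>
        rw [hTsucc, ih, hWsucc]
        have hx1 := hxmem (n+1)
        rw [hWsucc] at hx1
        revert hx1
        split
        · intro hx1
          rw [if_neg (fun h => Set.disjoint_left.mp (hDisj (W n)) h hx1)]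
        · intro hx1
          rw [if_pos hx1]
    refine ⟨x, hxC, funext fun n => ?_⟩
    simp only [hq, hTW n]
    have hx1 := hxmem (n+1)
    rw [hWsucc] at hx1
    by_cases hσ : σ n
    · rw [hσ, if_pos rfl] at hx1
      have : x ∉ (Φl (W n)).val := fun h => Set.disjoint_left.mp (hDisj (W n)) h hx1
      rw [decide_eq_false this, hσ]
      rfl
    · rw [Bool.not_eq_true] at hσ
      rw [hσ] at hx1
      rw [if_neg (by simp)] at hx1
      rw [decide_eq_true hx1, hσ]
      rfl
  -- the non-injectivity pair has equal codes
  have hqpair : q x₀ = q y₀ := by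
    have hTpair : ∀ n, T x₀ n = T y₀ n := by
      intro n
      induction n with
      | zero => rfl
      | succ n ih =>
        rw [hTsucc, hTsucc, ih]
        have hiff := hXY (T y₀ n) (ih ▸ hTmem x₀ hx₀ n) (hTmem y₀ hy₀ n)
        by_cases h : y₀ ∈ (Φl (T y₀ n)).val
        · rw [if_pos (hiff.mpr h), if_pos h]
        · rw [if_neg (fun hh => h (hiff.mp hh)), if_neg h]
    funext n
    simp only [hq, hTpair n]
    have hiff := hXY (T y₀ n) ((hTpair n) ▸ hTmem x₀ hx₀ n) (hTmem y₀ hy₀ n)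
    by_cases h : y₀ ∈ (Φl (T y₀ n)).val
    · rw [decide_eq_true h, decide_eq_true (hiff.mpr h)]
    · rw [decide_eq_false h, decide_eq_false (fun hh => h (hiff.mp hh))]
  -- the Cantor-onto map
  obtain ⟨s, hscont, hsmem, hssurj⟩ := exists_cantor_onto C hCclopen.1 hCne
  -- assemble
  refine ⟨fun x => if x ∈ C then s (q x) else x, ?_, ?_, ?_⟩
  · apply Continuous.if
    · intro a ha
      have h0 : frontier {x : X | x ∈ C} = (∅ : Set X) := by
        rw [Set.setOf_mem_eq]; exact hCclopen.frontier_eq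
      rw [h0] at ha
      exact absurd ha (notMem_empty a)
    · exact hscont.comp (continuous_pi fun n => (hqcont n).continuous)
    · exact continuous_id
  · intro z
    by_cases hz : z ∈ C
    · obtain ⟨σ, hσ⟩ := hssurj z hz
      obtain ⟨x, hxC, hxq⟩ := hqsurj σ
      exact ⟨x, by show (if x ∈ C then s (q x) else x) = z; rw [if_pos hxC, hxq, hσ]⟩
    · exact ⟨z, by show (if z ∈ C then s (q z) else z) = z; rw [if_neg hz]⟩
  · intro hinj
    have h1 : (if x₀ ∈ C then s (q x₀) else x₀) = (if y₀ ∈ C then s (q y₀) else y₀) := by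
      rw [if_pos hx₀, if_pos hy₀, hqpair]
    exact hy₀x₀ (hinj h1).symm


/-- The system `(X, f)` is uniformly rigid. -/
def UniformlyRigid {X : Type*} [MetricSpace X] (f : X → X) : Prop :=
  ∀ ε > (0 : ℝ), ∃ n : ℕ, 0 < n ∧ ∀ x : X, dist (f^[n] x) x < ε

/-- A compact metric space `X` is rigid if every continuous surjection of `X` is
uniformly rigid. -/
def RigidSpace (X : Type*) [MetricSpace X] : Prop :=
  ∀ f : X → X, Continuous f → Function.Surjective f → UniformlyRigid f

/-- A totally disconnected compact metric space is rigid if and only if it is finite. -/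
theorem totallyDisconnected_rigid_iff_finite
    {X : Type*} [MetricSpace X] [CompactSpace X] [TotallyDisconnectedSpace X] :
    RigidSpace X ↔ Finite X := by
  constructor
  · intro hR
    by_contra hfin
    have hX : Infinite X := not_finite_iff_infinite.mp hfin
    obtain ⟨f, hfc, hfs, hfni⟩ :
        ∃ f : X → X, Continuous f ∧ Function.Surjective f ∧ ¬ Function.Injective f := by
      by_cases hI : {x : X | IsOpen ({x} : Set X)}.Finite
      · exact caseB hX hI
      · exact caseA hI
    apply hfni
    intro x y hxy
    by_contra hne
    have hd : 0 < dist x y := dist_pos.mpr hne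
    obtain ⟨n, hn, h⟩ := hR f hfc hfs (dist x y / 2) (by linarith)
    have hiter : f^[n] x = f^[n] y := by
      obtain ⟨m, rfl⟩ := Nat.exists_eq_succ_of_ne_zero hn.ne'
      simp [Function.iterate_succ_apply, hxy]
    have h1 := h x
    have h2 := h y
    rw [hiter] at h1
    have := dist_triangle x (f^[n] y) y
    rw [dist_comm x (f^[n] y)] at this
    linarith [h1, h2, this]
  · intro hX
    exact rigid_of_finite hX
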